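/- Let λ be a real number with 0 < λ < 1, let x be a real number with x > 0, and let k ≥ 1 be an integer. Then ζ_λ(1 − k, x) = −B_k(λ; x)/k, i.e. the Hurwitz-type λ-zeta function interpolates the λ-Bernoulli polynomials at non-positive integers. -/

import Mathlib

set_option maxHeartbeats 1000000


/-- The λ-Bernoulli numbers `B_n(λ)`, defined by `B_0(λ) = Log λ / (λ - 1)` and, for `n ≥ 1`,
by the recurrence `λ·∑_{k=0}^{n} C(n,k)·B_k(λ) - B_n(λ) = (1 if n = 1, 0 if n ≥ 2)`,
encoding the generating function `(Log λ + t)/(λ e^t - 1) = ∑ B_n(λ) t^n/n!`. -/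
noncomputable def lambdaBernoulli (lam : ℂ) : ℕ → ℂ
  | 0 => Complex.log lam / (lam - 1)
  | n + 1 =>
      ((if n = 0 then (1 : ℂ) else 0) -
        lam * ∑ k : Fin (n + 1), ((n + 1).choose (k : ℕ) : ℂ) * lambdaBernoulli lam k) / (lam - 1)

/-- The λ-Bernoulli polynomials `B_n(λ; x) = ∑_{k=0}^{n} C(n,k)·B_k(λ)·x^{n-k}`. -/
noncomputable def lambdaBernoulliPoly (lam : ℂ) (n : ℕ) (x : ℂ) : ℂ :=
  ∑ k ∈ Finset.range (n + 1), (n.choose k : ℂ) * lambdaBernoulli lam k * x ^ (n - k)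

/-- The Hurwitz-type λ-zeta function, for real `0 < λ < 1` and real `x > 0`:
`ζ_λ(s, x) = (log λ/(1 - s))·∑_{n≥0} λ^n·(n + x)^{1-s} + ∑_{n≥0} λ^n·(n + x)^{-s}`,
complex powers of the positive real `n + x` being taken via the real logarithm. -/
noncomputable def hurwitzLambdaZeta (lam x : ℝ) (s : ℂ) : ℂ :=
  ((Real.log lam : ℂ) / (1 - s)) *
      (∑' n : ℕ, (lam : ℂ) ^ n * ((((n : ℝ) + x : ℝ)) : ℂ) ^ (1 - s)) +
    ∑' n : ℕ, (lam : ℂ) ^ n * ((((n : ℝ) + x : ℝ)) : ℂ) ^ (-s)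

/-- symmetric triangular swap -/
lemma tri_swap {M : Type*} [AddCommMonoid M] (N : ℕ) (f : ℕ → ℕ → M) :
    ∑ k ∈ Finset.range N, ∑ i ∈ Finset.range (N - k), f k i
      = ∑ i ∈ Finset.range N, ∑ k ∈ Finset.range (N - i), f k i := by
  rw [Finset.sum_sigma', Finset.sum_sigma']
  refine Finset.sum_nbij' (fun x ↦ ⟨x.2, x.1⟩) (fun x ↦ ⟨x.2, x.1⟩) ?_ ?_
    (fun _ _ ↦ rfl) (fun _ _ ↦ rfl) (fun _ _ ↦ rfl) <;>
  · simp only [Finset.mem_range, Sigma.forall, Finset.mem_sigma]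
    intro a b h
    omega

/-- skew triangular swap -/
lemma tri_swap' {M : Type*} [AddCommMonoid M] (N : ℕ) (f : ℕ → ℕ → M) :
    ∑ j ∈ Finset.range N, ∑ k ∈ Finset.range (j + 1), f j k
      = ∑ k ∈ Finset.range N, ∑ i ∈ Finset.range (N - k), f (i + k) k := by
  induction N with
  | zero => simp
  | succ N ih =>
    have h1 : ∀ k ∈ Finset.range N, (∑ i ∈ Finset.range (N + 1 - k), f (i + k) k)
        = (∑ i ∈ Finset.range (N - k), f (i + k) k) + f N k := by
      intro k hk
      rw [Finset.mem_range] at hk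
      rw [show N + 1 - k = (N - k) + 1 by omega, Finset.sum_range_succ]
      congr 2
      omega
    have h2 : ∑ k ∈ Finset.range (N+1), ∑ i ∈ Finset.range (N + 1 - k), f (i + k) k
        = (∑ k ∈ Finset.range N, ∑ i ∈ Finset.range (N - k), f (i + k) k)
          + ∑ k ∈ Finset.range (N+1), f N k := by
      rw [Finset.sum_range_succ _ N, Finset.sum_congr rfl h1, Finset.sum_add_distrib,
        show N + 1 - N = 1 by omega, Finset.sum_range_one, Finset.sum_range_succ _ N]
      rw [zero_add, add_assoc]
    rw [Finset.sum_range_succ _ N, ih, h2]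

lemma Brec (lam : ℂ) (hlam : lam ≠ 1) (j : ℕ) :
    lam * ∑ k ∈ Finset.range (j + 1), (j.choose k : ℂ) * lambdaBernoulli lam k
      - lambdaBernoulli lam j
    = (if j = 1 then 1 else 0) + (if j = 0 then Complex.log lam else 0) := by
  have hl1 : lam - 1 ≠ 0 := sub_ne_zero.mpr hlam
  cases j with
  | zero =>
      simp [lambdaBernoulli]
      field_simp
  | succ n =>
      have hdef : lambdaBernoulli lam (n + 1) =
          ((if n = 0 then (1 : ℂ) else 0) -
            lam * ∑ k ∈ Finset.range (n + 1), ((n + 1).choose k : ℂ) * lambdaBernoulli lam k)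
              / (lam - 1) := by
        rw [lambdaBernoulli,
          show (∑ k : Fin (n+1), ((n + 1).choose (k:ℕ) : ℂ) * lambdaBernoulli lam k)
            = ∑ k ∈ Finset.range (n+1), ((n + 1).choose k : ℂ) * lambdaBernoulli lam k from
            Fin.sum_univ_eq_sum_range
              (fun m => ((n + 1).choose m : ℂ) * lambdaBernoulli lam m) (n+1)]
      rw [Finset.sum_range_succ, Nat.choose_self]
      rw [mul_add, hdef]
      have hne : (n + 1 : ℕ) ≠ 0 := n.succ_ne_zero
      have : (if n + 1 = 1 then (1:ℂ) else 0) = (if n = 0 then (1:ℂ) else 0) := by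
        simp [Nat.succ_eq_add_one]
      rw [this]
      simp only [hne, if_false, add_zero, Nat.cast_one, one_mul]
      field_simp
      split_ifs <;> ring

lemma summable_real (lam x : ℝ) (h0 : 0 < lam) (h1 : lam < 1) (hx : 0 < x) (m : ℕ) :
    Summable (fun n : ℕ => lam ^ n * ((n : ℝ) + x) ^ m) := by
  have hgeom : Summable (fun n : ℕ => ((n : ℝ)) ^ m * lam ^ n) :=
    summable_pow_mul_geometric_of_norm_lt_one m
      (by rw [Real.norm_eq_abs, abs_of_pos h0]; exact h1)
  have h2 : Summable (fun n : ℕ => (((n + 1 : ℕ) : ℝ)) ^ m * lam ^ (n + 1)) :=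
    (summable_nat_add_iff 1).mpr hgeom
  have h3 : Summable (fun n : ℕ => ((n : ℝ) + 1) ^ m * lam ^ n) := by
    refine (h2.mul_left lam⁻¹).congr fun n => ?_
    push_cast
    field_simp
    ring
  have h4 : Summable (fun n : ℕ => (x + 1) ^ m * (((n : ℝ) + 1) ^ m * lam ^ n)) :=
    h3.mul_left _
  refine Summable.of_nonneg_of_le (fun n => by positivity) (fun n => ?_) h4
  have hnx : (0:ℝ) ≤ (n : ℝ) + x := by positivity
  have hn0 : (0:ℝ) ≤ (n : ℝ) * x := mul_nonneg (Nat.cast_nonneg n) hx.le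
  have hb1 : (n : ℝ) + x ≤ ((n:ℝ) + 1) * (x + 1) := by nlinarith
  have hb : ((n : ℝ) + x) ^ m ≤ (((n:ℝ) + 1) * (x + 1)) ^ m := pow_le_pow_left₀ hnx hb1 m
  calc lam ^ n * ((n : ℝ) + x) ^ m
      ≤ lam ^ n * ((((n:ℝ) + 1) * (x + 1)) ^ m) :=
        mul_le_mul_of_nonneg_left hb (by positivity)
    _ = (x + 1) ^ m * (((n : ℝ) + 1) ^ m * lam ^ n) := by rw [mul_pow]; ring

lemma summable_aux (lam x : ℝ) (h0 : 0 < lam) (h1 : lam < 1) (hx : 0 < x) (m : ℕ) :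
    Summable (fun n : ℕ => (lam : ℂ) ^ n * ((((n : ℝ) + x : ℝ)) : ℂ) ^ m) := by
  refine Summable.of_norm ?_
  have := summable_real lam x h0 h1 hx m
  refine this.congr fun n => ?_
  simp only [norm_mul, norm_pow, Complex.norm_real, Real.norm_eq_abs,
    abs_of_pos h0, abs_of_pos (show (0:ℝ) < (n:ℝ) + x by positivity)]

noncomputable def lamS (lam x : ℝ) (m : ℕ) : ℂ :=
  ∑' n : ℕ, (lam : ℂ) ^ n * ((((n : ℝ) + x : ℝ)) : ℂ) ^ m

lemma Skey (lam x : ℝ) (h0 : 0 < lam) (h1 : lam < 1) (hx : 0 < x) (m : ℕ) :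
    (lam : ℂ) * ∑ j ∈ Finset.range (m + 1), (m.choose j : ℂ) * lamS lam x j
      = lamS lam x m - (x : ℂ) ^ m := by
  have hs := fun j => summable_aux lam x h0 h1 hx j
  have key : ∀ n : ℕ, ((lam : ℂ)) * ∑ j ∈ Finset.range (m + 1), (m.choose j : ℂ) *
      ((lam : ℂ) ^ n * ((((n : ℝ) + x : ℝ)) : ℂ) ^ j)
      = (lam : ℂ) ^ (n + 1) * (((((n + 1 : ℕ) : ℝ) + x : ℝ)) : ℂ) ^ m := by
    intro n
    have hcast : ((((n + 1 : ℕ) : ℝ) + x : ℝ) : ℂ) = ((((n : ℝ) + x : ℝ)) : ℂ) + 1 := by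
      push_cast
      ring
    rw [hcast, add_pow]
    rw [Finset.mul_sum, Finset.mul_sum]
    refine Finset.sum_congr rfl fun j hj => ?_
    rw [one_pow, mul_one, pow_succ]
    ring
  calc (lam : ℂ) * ∑ j ∈ Finset.range (m + 1), (m.choose j : ℂ) * lamS lam x j
      = (lam : ℂ) * ∑ j ∈ Finset.range (m + 1),
          ∑' n : ℕ, (m.choose j : ℂ) * ((lam : ℂ) ^ n * ((((n : ℝ) + x : ℝ)) : ℂ) ^ j) := by
        refine congrArg (fun z => (lam : ℂ) * z) ?_
        refine Finset.sum_congr rfl fun j _ => ?_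
        rw [lamS]
        exact (tsum_mul_left).symm
    _ = ∑' n : ℕ, ((lam : ℂ)) * ∑ j ∈ Finset.range (m + 1), (m.choose j : ℂ) *
          ((lam : ℂ) ^ n * ((((n : ℝ) + x : ℝ)) : ℂ) ^ j) := by
        rw [← Summable.tsum_finsetSum (fun j _ => ((hs j).mul_left _)), tsum_mul_left]
    _ = ∑' n : ℕ, (lam : ℂ) ^ (n + 1) * (((((n + 1 : ℕ) : ℝ) + x : ℝ)) : ℂ) ^ m :=
        tsum_congr key
    _ = lamS lam x m - (x : ℂ) ^ m := by
        rw [lamS, Summable.tsum_eq_zero_add (hs m)]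
        simp

lemma Prec (lam : ℂ) (hlam : lam ≠ 1) (x : ℂ) (m : ℕ) :
    lam * ∑ j ∈ Finset.range (m + 1), (m.choose j : ℂ) * lambdaBernoulliPoly lam j x
      - lambdaBernoulliPoly lam m x
    = Complex.log lam * x ^ m + (m : ℂ) * x ^ (m - 1) := by
  have stepA : ∑ j ∈ Finset.range (m + 1), (m.choose j : ℂ) * lambdaBernoulliPoly lam j x
      = ∑ k ∈ Finset.range (m + 1), ∑ i ∈ Finset.range (m + 1 - k),
          ((m.choose k : ℂ) * ((m - k).choose i : ℂ)) * lambdaBernoulli lam k * x ^ i := by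
    simp only [lambdaBernoulliPoly, Finset.mul_sum]
    rw [tri_swap' (m+1) (fun j k => (m.choose j : ℂ) *
      ((j.choose k : ℂ) * lambdaBernoulli lam k * x ^ (j - k)))]
    refine Finset.sum_congr rfl fun k hk => Finset.sum_congr rfl fun i hi => ?_
    rw [Finset.mem_range] at hk hi
    have h2 : (m.choose (i+k)) * ((i+k).choose k) = m.choose k * (m - k).choose i := by
      rw [Nat.choose_mul (Nat.le_add_left k i)]
      congr 2
      omega
    have h3 : i + k - k = i := by omega
    have h2c : ((m.choose (i+k)) : ℂ) * ((i+k).choose k : ℂ)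
        = (m.choose k : ℂ) * ((m - k).choose i : ℂ) := by exact_mod_cast congrArg (Nat.cast) h2
    rw [h3]
    linear_combination (lambdaBernoulli lam k * x ^ i) * h2c
  rw [stepA]
  -- swap the double sum
  rw [tri_swap (m+1) (fun k i => ((m.choose k : ℂ) * ((m - k).choose i : ℂ)) *
      lambdaBernoulli lam k * x ^ i)]
  -- exchange binomial coefficients
  have stepC : ∀ i ∈ Finset.range (m+1), ∀ k ∈ Finset.range (m + 1 - i),
      ((m.choose k : ℂ) * ((m - k).choose i : ℂ)) * lambdaBernoulli lam k * x ^ i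
      = (m.choose i : ℂ) * x ^ i * (((m - i).choose k : ℂ) * lambdaBernoulli lam k) := by
    intro i hi k hk
    rw [Finset.mem_range] at hi hk
    have h4 : (m.choose k) * ((m - k).choose i) = m.choose i * (m - i).choose k := by
      have e1 : m.choose (k+i) * ((k+i).choose k) = m.choose k * (m - k).choose i := by
        rw [Nat.choose_mul (Nat.le_add_right k i)]
        congr 2
        omega
      have e2 : m.choose (k+i) * ((k+i).choose i) = m.choose i * (m - i).choose k := by
        rw [Nat.choose_mul (Nat.le_add_left i k)]
        congr 2
        omega
      have e3 : (k+i).choose k = (k+i).choose i := by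
        rw [← Nat.choose_symm (Nat.le_add_left i k)]
        congr 1
        omega
      rw [← e1, e3, e2]
    rw [← Nat.cast_mul, h4]
    push_cast
    ring
  rw [Finset.sum_congr rfl (fun i hi => Finset.sum_congr rfl (stepC i hi))]
  -- pull constants out and apply the Bernoulli recurrence
  have stepD : lam * ∑ i ∈ Finset.range (m+1), ∑ k ∈ Finset.range (m + 1 - i),
      (m.choose i : ℂ) * x ^ i * (((m - i).choose k : ℂ) * lambdaBernoulli lam k)
      = ∑ i ∈ Finset.range (m+1), (m.choose i : ℂ) * x ^ i *
          (lambdaBernoulli lam (m - i) + (if m - i = 1 then 1 else 0)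
            + (if m - i = 0 then Complex.log lam else 0)) := by
    rw [Finset.mul_sum]
    refine Finset.sum_congr rfl fun i hi => ?_
    rw [Finset.mem_range] at hi
    have hr : m + 1 - i = (m - i) + 1 := by omega
    rw [hr, ← Finset.mul_sum]
    have := Brec lam hlam (m - i)
    linear_combination ((m.choose i : ℂ) * x ^ i) * this
  rw [stepD]
  simp only [mul_add, Finset.sum_add_distrib]
  have T1 : ∑ i ∈ Finset.range (m+1), (m.choose i : ℂ) * x ^ i * lambdaBernoulli lam (m - i)
      = lambdaBernoulliPoly lam m x := by
    rw [lambdaBernoulliPoly]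
    rw [← Finset.sum_range_reflect
      (fun k => (m.choose k : ℂ) * lambdaBernoulli lam k * x ^ (m - k)) (m+1)]
    refine Finset.sum_congr rfl fun j hj => ?_
    rw [Finset.mem_range] at hj
    rw [show m + 1 - 1 - j = m - j by omega, Nat.choose_symm (by omega),
      show m - (m - j) = j by omega]
    ring
  have T2 : ∑ i ∈ Finset.range (m+1), (m.choose i : ℂ) * x ^ i * (if m - i = 1 then (1:ℂ) else 0)
      = (m : ℂ) * x ^ (m - 1) := by
    cases m with
    | zero => simp
    | succ n =>
      rw [Finset.sum_eq_single_of_mem n (Finset.mem_range.mpr (by omega))]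
      · rw [if_pos (by omega), Nat.choose_succ_self_right]
        push_cast
        simp [Nat.succ_sub_one]
      · intro i hi hne
        rw [Finset.mem_range] at hi
        rw [if_neg (by omega), mul_zero]
  have T3 : ∑ i ∈ Finset.range (m+1), (m.choose i : ℂ) * x ^ i *
        (if m - i = 0 then Complex.log lam else 0)
      = Complex.log lam * x ^ m := by
    rw [Finset.sum_eq_single_of_mem m (by simp)]
    · rw [if_pos (by omega), Nat.choose_self]
      push_cast
      ring
    · intro i hi hne
      rw [Finset.mem_range] at hi
      rw [if_neg (by omega), mul_zero]
  rw [T1, T2, T3]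
  ring

lemma Qmain (lam x : ℝ) (h0 : 0 < lam) (h1 : lam < 1) (hx : 0 < x) :
    ∀ m : ℕ, Complex.log lam * lamS lam x m + (m : ℂ) * lamS lam x (m - 1)
      = -lambdaBernoulliPoly (lam : ℂ) m (x : ℂ) := by
  have hlam : (lam : ℂ) ≠ 1 := by
    intro h
    rw [Complex.ofReal_eq_one] at h
    exact absurd h (ne_of_lt h1)
  have hne : (lam : ℂ) - 1 ≠ 0 := sub_ne_zero.mpr hlam
  intro m
  induction m using Nat.strong_induction_on with
  | _ m ih =>
    set L := Complex.log (lam : ℂ) with hL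
    have e1 : ∑ j ∈ Finset.range (m+1), (m.choose j : ℂ) *
        (L * lamS lam x j + (j:ℂ) * lamS lam x (j-1))
        = L * (∑ j ∈ Finset.range (m+1), (m.choose j : ℂ) * lamS lam x j)
          + ∑ j ∈ Finset.range (m+1), (m.choose j : ℂ) * (j:ℂ) * lamS lam x (j-1) := by
      rw [Finset.mul_sum, ← Finset.sum_add_distrib]
      exact Finset.sum_congr rfl fun j _ => by ring
    have e2 : ∑ j ∈ Finset.range (m+1), (m.choose j : ℂ) * (j:ℂ) * lamS lam x (j-1)
        = (m:ℂ) * ∑ i ∈ Finset.range m, ((m-1).choose i : ℂ) * lamS lam x i := by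
      cases m with
      | zero => simp
      | succ n =>
        rw [Finset.sum_range_succ' _ (n+1)]
        simp only [Nat.cast_zero, mul_zero, zero_mul, add_zero, Nat.add_sub_cancel]
        rw [Finset.mul_sum]
        refine Finset.sum_congr rfl fun i hi => ?_
        have hcc : (n+1).choose (i+1) * (i+1) = (n+1) * (n.choose i) :=
          (Nat.add_one_mul_choose_eq n i).symm
        have hccC : ((n+1).choose (i+1) : ℂ) * ((i+1 : ℕ) : ℂ)
            = ((n+1 : ℕ) : ℂ) * (n.choose i : ℂ) := by exact_mod_cast congrArg Nat.cast hcc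
        push_cast at hccC ⊢
        linear_combination (lamS lam x i) * hccC
    -- the Q-recurrence
    have hA := Skey lam x h0 h1 hx m
    have hQ : (lam:ℂ) * (∑ j ∈ Finset.range (m+1), (m.choose j:ℂ) *
        (L * lamS lam x j + (j:ℂ) * lamS lam x (j-1)))
        - (L * lamS lam x m + (m:ℂ) * lamS lam x (m-1))
        = -(L * (x:ℂ)^m + (m:ℂ) * (x:ℂ)^(m-1)) := by
      rw [e1, e2]
      cases m with
      | zero =>
        simp only [Nat.cast_zero, zero_mul, mul_zero, add_zero, pow_zero]
        linear_combination L * hA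
      | succ n =>
        have hB := Skey lam x h0 h1 hx n
        simp only [Nat.add_sub_cancel]
        push_cast at hA hB ⊢
        linear_combination L * hA + ((n:ℂ)+1) * hB
    have hP := Prec (lam : ℂ) hlam (x : ℂ) m
    -- split off the top term of each sum
    have hz : ∑ j ∈ Finset.range m, (m.choose j : ℂ) * lambdaBernoulliPoly (lam:ℂ) j (x:ℂ)
        = - ∑ j ∈ Finset.range m, (m.choose j : ℂ) *
            (L * lamS lam x j + (j:ℂ) * lamS lam x (j-1)) := by
      rw [← Finset.sum_neg_distrib]
      refine Finset.sum_congr rfl fun j hj => ?_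
      rw [Finset.mem_range] at hj
      linear_combination ((m.choose j : ℂ)) * ih j hj
    rw [Finset.sum_range_succ, Nat.choose_self, Nat.cast_one, one_mul] at hQ hP
    have hfin : ((lam:ℂ) - 1) *
        ((L * lamS lam x m + (m:ℂ) * lamS lam x (m-1))
          + lambdaBernoulliPoly (lam:ℂ) m (x:ℂ)) = 0 := by
      linear_combination hQ + hP - (lam:ℂ) * hz
    have h2 := (mul_eq_zero.mp hfin).resolve_left hne
    linear_combination h2

/-- for real `0 < λ < 1`, real `x > 0` and an integer `k ≥ 1`,
`ζ_λ(1 - k, x) = -B_k(λ; x)/k`: the Hurwitz-type λ-zeta function interpolates the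
λ-Bernoulli polynomials at non-positive integers. -/
theorem hurwitzLambdaZeta_interpolation (lam x : ℝ) (h0 : 0 < lam) (h1 : lam < 1)
    (hx : 0 < x) (k : ℕ) (hk : 1 ≤ k) :
    hurwitzLambdaZeta lam x (1 - (k : ℂ)) = -lambdaBernoulliPoly (lam : ℂ) k (x : ℂ) / (k : ℂ) := by
  rw [hurwitzLambdaZeta]
  have hk0 : (k : ℂ) ≠ 0 := Nat.cast_ne_zero.mpr (by omega)
  have he1 : (1 : ℂ) - (1 - (k:ℂ)) = ((k : ℕ) : ℂ) := by ring
  have he2 : -((1:ℂ) - (k:ℂ)) = ((k - 1 : ℕ) : ℂ) := by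
    rw [Nat.cast_sub hk]
    push_cast
    ring
  have hlog : (Real.log lam : ℂ) = Complex.log (lam : ℂ) := Complex.ofReal_log h0.le
  rw [he1, he2]
  simp only [Complex.cpow_natCast]
  have hQ := Qmain lam x h0 h1 hx k
  rw [lamS, lamS] at hQ
  rw [hlog]
  rw [div_mul_eq_mul_div, div_add' _ _ _ hk0, eq_div_iff hk0, div_mul_cancel₀ _ hk0]
  linear_combination hQ
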